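/- Let R = k[[t]] and M an R-module. Then RHom_R(k((t)), M) is computed by the derived limit of the tower (t^n R ⊗_R M)_n shifted appropriately; in particular H^i(RHom_R(k((t)), M)) = 0 for all i outside {0, 1}. Hence the functor RHom_R(k((t)), −) : D(R) → D(R) has cohomological dimension at most 1 on modules. -/

import Mathlib

open CategoryTheory CategoryTheory.Limits

noncomputable section

namespace Stmt14Aux

open Limits Polynomial

variable (k : Type) [Field k]

/-- The base ring `R = k⟦X⟧`. -/
local notation "R" => PowerSeries k
/-- The Laurent series field. -/
local notation "L" => LaurentSeries k

/-- The polynomial `t·Y - 1` presenting `k((t)) = R[Y]/(tY-1)`. -/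
def ppoly : Polynomial R := Polynomial.C PowerSeries.X * Polynomial.X - 1

/-- The free module `R[Y]`. -/
abbrev Pmod : ModuleCat R := ModuleCat.of R (Polynomial R)

/-- Multiplication by `ppoly` as a morphism. -/
def dmap : Pmod k ⟶ Pmod k := ModuleCat.ofHom (LinearMap.mulLeft R (ppoly k))

/-- `AdjoinRoot (tY-1) ≃ₐ[R] k((t))`, via the localization description of both sides. -/
def eAdj : AdjoinRoot (ppoly k) ≃ₐ[R] L :=
  (Localization.awayEquivAdjoin (PowerSeries.X : R)).symm.trans
    (IsLocalization.algEquiv (Submonoid.powers (PowerSeries.X : R))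
      (Localization.Away (PowerSeries.X : R)) L)

/-- The algebra map `R[Y] → k((t))`, `Y ↦ t⁻¹`. -/
def phi : Polynomial R →ₐ[R] L :=
  (eAdj k).toAlgHom.comp (Ideal.Quotient.mkₐ R (Ideal.span {ppoly k}))

/-- The augmentation as a morphism of modules. -/
def pimap : Pmod k ⟶ ModuleCat.of R L := ModuleCat.ofHom (phi k).toLinearMap

lemma phi_surjective : Function.Surjective (phi k) := by
  intro z
  obtain ⟨y, rfl⟩ := (eAdj k).surjective z
  obtain ⟨q, rfl⟩ := Ideal.Quotient.mkₐ_surjective R (I := Ideal.span {ppoly k}) y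
  exact ⟨q, rfl⟩

lemma phi_ker (x : Polynomial R) : phi k x = 0 ↔ x ∈ Ideal.span {ppoly k} := by
  constructor
  · intro h
    have : (Ideal.Quotient.mkₐ R (Ideal.span {ppoly k})) x = 0 := by
      apply (eAdj k).injective
      exact h.trans (map_zero (eAdj k)).symm
    exact (Ideal.Quotient.eq_zero_iff_mem).1 this
  · intro h
    have h0 : (Ideal.Quotient.mkₐ R (Ideal.span {ppoly k})) x = 0 :=
      (Ideal.Quotient.eq_zero_iff_mem).2 h
    exact (congrArg (⇑(eAdj k)) h0).trans (map_zero _)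

lemma ppoly_ne_zero : ppoly k ≠ 0 := by
  intro h
  have := congrArg (fun q => Polynomial.coeff q 0) h
  simp [ppoly] at this

lemma dmap_injective : Function.Injective (dmap k) := by
  have h : Function.Injective (LinearMap.mulLeft R (ppoly k) : Polynomial R →ₗ[R] Polynomial R) := by
    intro a b hab
    rw [LinearMap.mulLeft_apply, LinearMap.mulLeft_apply] at hab
    exact mul_left_cancel₀ (ppoly_ne_zero k) hab
  simpa [dmap] using h

lemma d_pi_zero : dmap k ≫ pimap k = 0 := by
  apply ModuleCat.hom_ext
  apply LinearMap.ext
  intro q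
  show phi k (LinearMap.mulLeft R (ppoly k) q) = 0
  rw [LinearMap.mulLeft_apply, map_mul,
    (phi_ker k _).2 (Ideal.mem_span_singleton_self _), zero_mul]

/-- The objects of the resolution: `R[Y]` in degrees `0` and `1`, zero elsewhere. -/
def Xobj : ℕ → ModuleCat R
  | 0 => Pmod k
  | 1 => Pmod k
  | _ => ModuleCat.of R PUnit

/-- The differentials of the resolution. -/
def dfun : ∀ n : ℕ, Xobj k (n + 1) ⟶ Xobj k n
  | 0 => dmap k
  | _ + 1 => 0

/-- The two-term complex `R[Y] → R[Y]`. -/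
def cplx : ChainComplex (ModuleCat R) ℕ :=
  ChainComplex.of (Xobj k) (dfun k) (by
    rintro (_ | n)
    · exact zero_comp
    · exact zero_comp)

lemma cplx_d_10 : (cplx k).d 1 0 = dmap k :=
  ChainComplex.of_d (Xobj k) (dfun k) 0

/-- The augmentation map to the single complex. -/
def piRes : cplx k ⟶ (ChainComplex.single₀ (ModuleCat R)).obj (ModuleCat.of R L) :=
  (ChainComplex.toSingle₀Equiv (cplx k) (ModuleCat.of R L)).symm
    ⟨pimap k, by rw [cplx_d_10]; exact d_pi_zero k⟩

lemma piRes_f_zero : (piRes k).f 0 = pimap k :=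
  ChainComplex.toSingle₀Equiv_symm_apply_f_zero _ _

/-- The short complex `R[Y] → R[Y] → k((t))`. -/
def scAug : ShortComplex (ModuleCat R) :=
  ShortComplex.mk (dmap k) (pimap k) (d_pi_zero k)

lemma scAug_exact : (scAug k).Exact := by
  rw [ShortComplex.moduleCat_exact_iff]
  intro x hx
  have hx' : x ∈ Ideal.span {ppoly k} := (phi_ker k x).1 (by
    simp [scAug, pimap] at hx
    exact hx)
  obtain ⟨c, hc⟩ := Ideal.mem_span_singleton.1 hx'
  exact ⟨c, by
    show (LinearMap.mulLeft R (ppoly k)) c = x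
    rw [LinearMap.mulLeft_apply]; exact hc.symm⟩

instance : Epi (scAug k).g :=
  (ModuleCat.epi_iff_surjective _).2 (by
    show Function.Surjective (phi k).toLinearMap
    rw [AlgHom.coe_toLinearMap]; exact phi_surjective k)

lemma cplx_exactAt_one : (cplx k).ExactAt 1 := by
  rw [HomologicalComplex.exactAt_iff' _ 2 1 0 (by simp) (by simp),
    ShortComplex.moduleCat_exact_iff]
  intro x hx
  have hd : (cplx k).d 1 0 x = 0 := hx
  rw [cplx_d_10] at hd
  have hx0 : x = 0 := by
    apply dmap_injective k
    exact hd.trans (map_zero _).symm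
  exact ⟨0, by simp [hx0]⟩

lemma isZero_Xobj (n : ℕ) : IsZero ((cplx k).X (n + 2)) :=
  ModuleCat.isZero_of_subsingleton (ModuleCat.of R PUnit)

lemma cplx_exactAt_ge_two (n : ℕ) : (cplx k).ExactAt (n + 2) := by
  rw [HomologicalComplex.exactAt_iff]
  exact ShortComplex.exact_of_isZero_X₂ _ (isZero_Xobj k n)

lemma d_piRes_zero : ((cplx k).sc' 1 0 0).f ≫
    ((HomologicalComplex.shortComplexFunctor' (ModuleCat R) _ 1 0 0).map (piRes k)).τ₂ = 0 := by
  show (cplx k).d 1 0 ≫ (piRes k).f 0 = 0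
  rw [cplx_d_10, piRes_f_zero]
  exact d_pi_zero k

instance quasiIso_piRes : QuasiIso (piRes k) := by
  constructor
  rintro (_ | _ | n)
  · -- degree 0
    rw [ChainComplex.quasiIsoAt₀_iff,
      ShortComplex.quasiIso_iff_isIso_descOpcycles _
        ((cplx k).shape 0 0 (fun h => Nat.succ_ne_zero 0 h))
        rfl rfl]
    let ψ : scAug k ⟶ (cplx k).sc' 1 0 0 :=
      { τ₁ := 𝟙 _
        τ₂ := 𝟙 _
        τ₃ := 0
        comm₁₂ := by
          show 𝟙 _ ≫ (cplx k).d 1 0 = dmap k ≫ 𝟙 _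
          rw [Category.id_comp, Category.comp_id]; exact cplx_d_10 k
        comm₂₃ := by
          show 𝟙 _ ≫ (cplx k).d 0 0 = pimap k ≫ 0
          rw [(cplx k).shape 0 0 (fun h => Nat.succ_ne_zero 0 h), Limits.comp_zero,
            Limits.comp_zero]
          rfl }
    have h1 : IsIso (scAug k).fromOpcycles := (scAug_exact k).isIso_fromOpcycles
    have key : ShortComplex.opcyclesMap ψ ≫
        ((cplx k).sc' 1 0 0).descOpcycles
          (((HomologicalComplex.shortComplexFunctor' (ModuleCat R) _ 1 0 0).map
              (piRes k)).τ₂) (by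
            exact d_piRes_zero k) =
        (scAug k).fromOpcycles := by
      refine (cancel_epi (scAug k).pOpcycles).1 ?_
      rw [ShortComplex.p_opcyclesMap_assoc,
        ShortComplex.p_descOpcycles]
      refine Eq.trans ?_ (ShortComplex.p_fromOpcycles (scAug k)).symm
      show 𝟙 _ ≫ (piRes k).f 0 = pimap k
      rw [Category.id_comp, piRes_f_zero]
    have hop : IsIso (ShortComplex.opcyclesMap ψ) :=
      ShortComplex.isIso_opcyclesMap_of_isIso_of_epi' ψ
        (inferInstanceAs (IsIso (𝟙 (scAug k).X₂))) (inferInstanceAs (Epi (𝟙 (scAug k).X₁)))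
    haveI := hop
    haveI := h1
    have hgoal := IsIso.of_isIso_fac_left (hh := h1) key
    exact hgoal
  · -- degree 1
    rw [quasiIsoAt_iff_exactAt' (piRes k) 1
      (ChainComplex.exactAt_succ_single_obj _ 0)]
    exact cplx_exactAt_one k
  · -- degrees ≥ 2
    rw [quasiIsoAt_iff_exactAt' (piRes k) (n + 2)
      (ChainComplex.exactAt_succ_single_obj _ (n + 1))]
    exact cplx_exactAt_ge_two k n

instance projective_Xobj (n : ℕ) : Projective ((cplx k).X n) := by
  match n with
  | 0 => exact ModuleCat.projective_of_free (Polynomial.basisMonomials R)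
  | 1 => exact ModuleCat.projective_of_free (Polynomial.basisMonomials R)
  | (m + 2) =>
    constructor
    intro E X' f e he
    refine ⟨0, ?_⟩
    rw [Limits.zero_comp]
    exact (isZero_Xobj k m).eq_of_src 0 f

/-- The length-one projective resolution of `k((t))` over `k⟦t⟧`. -/
def res : ProjectiveResolution (ModuleCat.of R L) where
  complex := cplx k
  projective := projective_Xobj k
  π := piRes k

end Stmt14Aux

open Stmt14Aux in
/-- Let `R = k⟦t⟧` and `M` an `R`-module.  The complex `RHom_R(k((t)), M)` has
cohomology concentrated in degrees `{0, 1}`: `H^i(RHom_R(k((t)), M)) = Ext^i_R(k((t)), M)`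
vanishes for `i ≥ 2` (and trivially for `i < 0`).  Hence `RHom_R(k((t)), −)` has
cohomological dimension at most `1` on modules. -/
theorem stmt14 (k : Type) [Field k] (M : ModuleCat (PowerSeries k)) (n : ℕ)
    (hn : 2 ≤ n) :
    Subsingleton
      (((Ext (PowerSeries k) (ModuleCat (PowerSeries k)) n).obj
        (Opposite.op (ModuleCat.of (PowerSeries k) (LaurentSeries k)))).obj M) := by
  obtain ⟨m, rfl⟩ : ∃ m, n = m + 2 := ⟨n - 2, by omega⟩
  have hz : IsZero
      (((Ext (PowerSeries k) (ModuleCat (PowerSeries k)) (m + 2)).obj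
        (Opposite.op (ModuleCat.of (PowerSeries k) (LaurentSeries k)))).obj M) := by
    refine IsZero.of_iso ?_ ((res k).isoExt (m + 2) M)
    rw [← HomologicalComplex.exactAt_iff_isZero_homology, HomologicalComplex.exactAt_iff]
    refine ShortComplex.exact_of_isZero_X₂ _ ?_
    rw [IsZero.iff_id_eq_zero]
    ext (x : _ ⟶ _)
    obtain rfl : x = 0 := (isZero_Xobj k m).eq_of_src x 0
    rfl
  have hid : 𝟙 (((Ext (PowerSeries k) (ModuleCat (PowerSeries k)) (m + 2)).obj
        (Opposite.op (ModuleCat.of (PowerSeries k) (LaurentSeries k)))).obj M) = 0 :=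
    (IsZero.iff_id_eq_zero _).1 hz
  have e := hz.iso (ModuleCat.isZero_of_subsingleton (ModuleCat.of (PowerSeries k) PUnit))
  exact Equiv.subsingleton e.toLinearEquiv.toEquiv

end
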